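/- If p ∈ ℤ[x] is a symplectically irreducible symplectic polynomial and some complex root of p is a root of unity, then every complex root of p is a root of unity. -/

import Mathlib

open Polynomial

/-- A polynomial is symplectic if it is monic of even degree `2n` (`n ≥ 1`) and palindromic. -/
def IsSymplecticPoly (p : Polynomial ℤ) : Prop :=
  p.Monic ∧ (∃ n : ℕ, 1 ≤ n ∧ p.natDegree = 2 * n) ∧
    ∀ i ≤ p.natDegree, p.coeff i = p.coeff (p.natDegree - i)

/-- A symplectic polynomial is symplectically irreducible if it is not the
product of two symplectic polynomials. -/
def SymplecticallyIrreducible (p : Polynomial ℤ) : Prop :=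
  IsSymplecticPoly p ∧
    ¬ ∃ p₁ p₂ : Polynomial ℤ, IsSymplecticPoly p₁ ∧ IsSymplecticPoly p₂ ∧ p = p₁ * p₂

lemma reverse_eq_of_palin {p : Polynomial ℤ}
    (h : ∀ i ≤ p.natDegree, p.coeff i = p.coeff (p.natDegree - i)) : p.reverse = p := by
  ext i
  rw [coeff_reverse]
  rcases le_or_gt i p.natDegree with hi | hi
  · rw [revAt_le hi]
    exact (h i hi).symm
  · have h1 : revAt p.natDegree i = i := by
      exact revAt_eq_self_of_lt hi
    rw [h1]

lemma palin_of_reverse {q : Polynomial ℤ} (h : q.reverse = q) :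
    ∀ i ≤ q.natDegree, q.coeff i = q.coeff (q.natDegree - i) := by
  intro i hi
  conv_lhs => rw [← h]
  rw [coeff_reverse, revAt_le hi]

lemma symplectic_quotient {p s q : Polynomial ℤ} (hp : IsSymplecticPoly p)
    (hs : IsSymplecticPoly s) (hpq : p = s * q) (hq : q.Monic) :
    q = 1 ∨ IsSymplecticPoly q := by
  have hs0 : s ≠ 0 := hs.1.ne_zero
  have hq0 : q ≠ 0 := hq.ne_zero
  have hrev : q.reverse = q := by
    have h1 : s * q = s * q.reverse := by
      calc s * q = p := hpq.symm
        _ = p.reverse := (reverse_eq_of_palin hp.2.2).symm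
        _ = s.reverse * q.reverse := by rw [hpq, reverse_mul_of_domain]
        _ = s * q.reverse := by rw [reverse_eq_of_palin hs.2.2]
    exact (mul_left_cancel₀ hs0 h1).symm
  have hdeg : p.natDegree = s.natDegree + q.natDegree := by
    rw [hpq, natDegree_mul hs0 hq0]
  obtain ⟨n, hn1, hn⟩ := hp.2.1
  obtain ⟨k, hk1, hk⟩ := hs.2.1
  by_cases hqd : q.natDegree = 0
  · exact Or.inl (hq.natDegree_eq_zero.mp hqd)
  · exact Or.inr ⟨hq, ⟨n - k, by omega, by omega⟩, palin_of_reverse hrev⟩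

lemma eq_of_symplectic_dvd {p s : Polynomial ℤ} (hp : SymplecticallyIrreducible p)
    (hs : IsSymplecticPoly s) (hdvd : s ∣ p) : p = s := by
  obtain ⟨q, hq⟩ := hdvd
  have hqm : q.Monic := hs.1.of_mul_monic_left (hq ▸ hp.1.1)
  rcases symplectic_quotient hp.1 hs hq hqm with h1 | h2
  · rw [hq, h1, mul_one]
  · exact absurd ⟨s, q, hs, h2, hq⟩ hp.2

lemma cyclotomic_symplectic {m : ℕ} (hm : 3 ≤ m) : IsSymplecticPoly (cyclotomic m ℤ) := by
  have hm0 : 0 < m := by omega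
  have hcoeff0 : (cyclotomic m ℤ).coeff 0 = 1 := cyclotomic_coeff_zero ℤ (by omega)
  refine ⟨cyclotomic.monic m ℤ, ?_, ?_⟩
  · obtain ⟨t, ht⟩ := Nat.totient_even (by omega : 2 < m)
    have htp := Nat.totient_pos.mpr hm0
    exact ⟨t, by omega, by rw [natDegree_cyclotomic]; omega⟩
  · refine palin_of_reverse ?_
    have hζ := Complex.isPrimitiveRoot_exp m hm0.ne'
    set ζ : ℂ := Complex.exp (2 * Real.pi * Complex.I / m) with hζdef
    have hζ0 : ζ ≠ 0 := hζ.ne_zero hm0.ne'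
    have hinv : IsPrimitiveRoot ζ⁻¹ m := hζ.inv
    letI : Invertible ζ := invertibleOfNonzero hζ0
    have haev : aeval ζ⁻¹ ((cyclotomic m ℤ).reverse) = 0 := by
      have h2 : eval₂ (algebraMap ℤ ℂ) ζ (cyclotomic m ℤ) = 0 := by
        rw [eval₂_eq_eval_map, map_cyclotomic]
        exact hζ.isRoot_cyclotomic hm0
      have h3 := (eval₂_reverse_eq_zero_iff (algebraMap ℤ ℂ) ζ (cyclotomic m ℤ)).mpr h2
      rwa [invOf_eq_inv, ← aeval_def] at h3
    have hdvd : cyclotomic m ℤ ∣ (cyclotomic m ℤ).reverse := by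
      have hd0 : minpoly ℤ ζ⁻¹ ∣ (cyclotomic m ℤ).reverse :=
        minpoly.isIntegrallyClosed_dvd (hinv.isIntegral hm0) haev
      rwa [← cyclotomic_eq_minpoly hinv hm0] at hd0
    have hntd : (cyclotomic m ℤ).natTrailingDegree = 0 :=
      natTrailingDegree_eq_zero.mpr (Or.inr (by rw [hcoeff0]; exact one_ne_zero))
    have hdegrev : (cyclotomic m ℤ).reverse.natDegree = (cyclotomic m ℤ).natDegree := by
      rw [reverse_natDegree, hntd, Nat.sub_zero]
    have hrevmonic : (cyclotomic m ℤ).reverse.Monic := by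
      unfold Monic
      rw [reverse_leadingCoeff]
      unfold trailingCoeff
      rw [hntd, hcoeff0]
    obtain ⟨u, hu⟩ := hdvd
    have hu0 : u ≠ 0 := by
      intro h; rw [h, mul_zero] at hu
      exact (cyclotomic.monic m ℤ).ne_zero (reverse_eq_zero.mp hu)
    have humonic : u.Monic := (cyclotomic.monic m ℤ).of_mul_monic_left (hu ▸ hrevmonic)
    have hud : u.natDegree = 0 := by
      have := natDegree_mul ((cyclotomic.monic m ℤ)).ne_zero hu0
      rw [← hu, hdegrev] at this
      omega
    rw [hu, humonic.natDegree_eq_zero.mp hud, mul_one]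

lemma sq_dvd_of_root {p : Polynomial ℤ} (hp : IsSymplecticPoly p) {c : ℤ} (hc : c * c = 1)
    (hroot : p.eval c = 0) : (X - C c) ^ 2 ∣ p := by
  obtain ⟨q, hq⟩ := dvd_iff_isRoot.mpr hroot
  have hXc : (X - C c) ≠ 0 := X_sub_C_ne_zero c
  have hq0 : q ≠ 0 := by
    intro h; rw [h, mul_zero] at hq; exact hp.1.ne_zero hq
  have hrevX : (X : Polynomial ℤ).reverse = 1 := by
    rw [reverse, natDegree_X, ← pow_one (X : Polynomial ℤ), reflect_monomial]
    simp [revAt_le]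
  have hrevlin : (X - C c).reverse = C (-c) * (X - C c) := by
    have h1 : (X - C c).reverse = 1 + C (-c) * X := by
      rw [show (X - C c : Polynomial ℤ) = X + C (-c) by rw [map_neg]; ring, reverse_add_C, natDegree_X,
        pow_one, hrevX]
    rw [h1, show (C (-c) : Polynomial ℤ) * (X - C c) = C (-c) * X + C (c * c) by
      simp only [map_mul, map_neg]; ring, hc, map_one]
    ring
  have hqrev : q = C (-c) * q.reverse := by
    have h1 : (X - C c) * q = (X - C c) * (C (-c) * q.reverse) := by
      calc (X - C c) * q = p := hq.symm
        _ = p.reverse := (reverse_eq_of_palin hp.2.2).symm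
        _ = (X - C c).reverse * q.reverse := by rw [hq, reverse_mul_of_domain]
        _ = (X - C c) * (C (-c) * q.reverse) := by rw [hrevlin]; ring
    exact mul_left_cancel₀ hXc h1
  -- evaluate at c
  letI : Invertible c := ⟨c, hc, hc⟩
  have hev : q.reverse.eval c * c ^ q.natDegree = q.eval c := by
    exact eval₂_reverse_mul_pow (RingHom.id ℤ) c q
  obtain ⟨n, hn1, hn⟩ := hp.2.1
  have hdeg : p.natDegree = 1 + q.natDegree := by
    rw [hq, natDegree_mul hXc hq0, natDegree_X_sub_C]
  have hpow : c ^ (q.natDegree + 1) = 1 := by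
    have : q.natDegree + 1 = 2 * n := by omega
    rw [this, pow_mul, pow_two, hc, one_pow]
  have hqc : q.eval c = 0 := by
    have h2 : q.eval c = -c * q.reverse.eval c := by
      conv_lhs => rw [hqrev]
      simp
    have h3 : q.reverse.eval c = q.eval c * c ^ q.natDegree := by
      have h4 : q.reverse.eval c * c ^ q.natDegree * c ^ q.natDegree
          = q.eval c * c ^ q.natDegree := by rw [hev]
      have h5 : c ^ q.natDegree * c ^ q.natDegree = 1 := by
        rw [← mul_pow, hc, one_pow]
      calc q.reverse.eval c = q.reverse.eval c * (c ^ q.natDegree * c ^ q.natDegree) := by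
            rw [h5, mul_one]
        _ = q.eval c * c ^ q.natDegree := by rw [← mul_assoc, hev]
    rw [h3] at h2
    have h6 : q.eval c = - (q.eval c * c ^ (q.natDegree + 1)) := by
      rw [pow_succ]
      calc q.eval c = -c * (q.eval c * c ^ q.natDegree) := h2
        _ = -(q.eval c * (c ^ q.natDegree * c)) := by ring
    rw [hpow, mul_one] at h6
    omega
  obtain ⟨r, hr⟩ := dvd_iff_isRoot.mpr hqc
  exact ⟨r, by rw [hq, hr]; ring⟩

lemma sq_symplectic {c : ℤ} (hc : c * c = 1) : IsSymplecticPoly ((X - C c) ^ 2) := by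
  have hdeg : ((X - C c) ^ 2).natDegree = 2 := by
    rw [natDegree_pow, natDegree_X_sub_C]
  have hexp : (X - C c) ^ 2 = X ^ 2 + C (-2 * c) * X + C 1 := by
    have : (C 1 : Polynomial ℤ) = C (c * c) := by rw [hc]
    rw [this]
    simp only [map_mul, map_neg, map_ofNat]
    ring
  have hmon : ((X - C c) ^ 2).Monic := (monic_X_sub_C c).pow 2
  have hc0 : ((X - C c) ^ 2).coeff 0 = 1 := by
    rw [coeff_zero_eq_eval_zero]
    simp [pow_two, hc]
  have hc2 : ((X - C c) ^ 2).coeff 2 = 1 := by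
    have := hmon.leadingCoeff
    rwa [leadingCoeff, hdeg] at this
  refine ⟨hmon, ⟨1, le_refl 1, by rw [hdeg]⟩, ?_⟩
  rw [hdeg]
  intro i hi
  interval_cases i
  · rw [show (2:ℕ) - 0 = 2 by rfl, hc0, hc2]
  · rfl
  · rw [show (2:ℕ) - 2 = 0 by rfl, hc0, hc2]

theorem all_roots_of_unity (p : Polynomial ℤ) (hp : SymplecticallyIrreducible p)
    (h : ∃ ζ : ℂ, Polynomial.aeval ζ p = 0 ∧ ∃ n : ℕ, 1 ≤ n ∧ ζ ^ n = 1) :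
    ∀ ζ : ℂ, Polynomial.aeval ζ p = 0 → ∃ n : ℕ, 1 ≤ n ∧ ζ ^ n = 1 := by
  obtain ⟨ζ, hζp, n, hn1, hζn⟩ := h
  have hfin : IsOfFinOrder ζ := isOfFinOrder_iff_pow_eq_one.mpr ⟨n, by omega, hζn⟩
  have hm0 : 0 < orderOf ζ := hfin.orderOf_pos
  have hprim : IsPrimitiveRoot ζ (orderOf ζ) := IsPrimitiveRoot.orderOf ζ
  set m := orderOf ζ with hmdef
  intro ζ' hζ'
  rcases lt_or_ge m 3 with hm3 | hm3
  · -- m = 1 or 2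
    have hc : ∃ c : ℤ, c * c = 1 ∧ ζ = (c : ℂ) := by
      interval_cases m
      · refine ⟨1, by norm_num, ?_⟩
        have h1 : ζ ^ 1 = 1 := hprim.pow_eq_one
        push_cast
        simpa using h1
      · have h2 : ζ ^ 2 = 1 := hprim.pow_eq_one
        have h3 : (ζ - 1) * (ζ + 1) = 0 := by linear_combination h2
        rcases mul_eq_zero.mp h3 with h4 | h4
        · exact ⟨1, by norm_num, by push_cast; exact sub_eq_zero.mp h4⟩
        · refine ⟨-1, by norm_num, ?_⟩
          push_cast
          exact eq_neg_of_add_eq_zero_left h4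
    obtain ⟨c, hcc, hζc⟩ := hc
    have hevalc : p.eval c = 0 := by
      have h1 : aeval ((c : ℤ) : ℂ) p = ((p.eval c : ℤ) : ℂ) := by
        rw [show ((c : ℤ) : ℂ) = algebraMap ℤ ℂ c by simp]
        exact aeval_algebraMap_apply_eq_algebraMap_eval c p
      rw [hζc] at hζp
      rw [h1] at hζp
      exact_mod_cast hζp
    have hpeq : p = (X - C c) ^ 2 :=
      eq_of_symplectic_dvd hp (sq_symplectic hcc) (sq_dvd_of_root hp.1 hcc hevalc)
    rw [hpeq] at hζ'
    have hζ'c : ζ' = (c : ℂ) := by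
      have : (ζ' - (c : ℂ)) ^ 2 = 0 := by
        simpa [sub_eq_zero] using hζ'
      have := pow_eq_zero_iff (n := 2) (by norm_num) |>.mp this
      exact sub_eq_zero.mp this
    refine ⟨2, by norm_num, ?_⟩
    rw [hζ'c]
    have h7 : ((c : ℂ)) ^ 2 = ((c * c : ℤ) : ℂ) := by push_cast; ring
    rw [h7, hcc]
    norm_num
  · -- m ≥ 3
    have hdvd : cyclotomic m ℤ ∣ p := by
      rw [cyclotomic_eq_minpoly hprim hm0]
      exact minpoly.isIntegrallyClosed_dvd (hprim.isIntegral hm0) hζp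
    have hpeq : p = cyclotomic m ℤ := eq_of_symplectic_dvd hp (cyclotomic_symplectic hm3) hdvd
    rw [hpeq] at hζ'
    have hroot : (cyclotomic m ℂ).IsRoot ζ' := by
      have : eval ζ' (map (algebraMap ℤ ℂ) (cyclotomic m ℤ)) = 0 := by
        rw [← eval_map_algebraMap] at hζ'
        exact hζ'
      rwa [map_cyclotomic] at this
    have hprim' : IsPrimitiveRoot ζ' m := (isRoot_cyclotomic_iff_charZero hm0).mp hroot
    exact ⟨m, hm0, hprim'.pow_eq_one⟩
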